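/- arXiv:1906.07747 — 4 statements merged into one kernel-verified Lean document; each statement's English description precedes it below -/
import Mathlib

section
/- Let G = (⟨a₁,a₂⟩ × ⟨a₃,a₄⟩) ⋊ ⟨b⟩ with the A₄-type action on each Klein factor (n = 2 case of the paper's group, |G| = 48). Set y₁ = a₁b, y₂ = b, y₃ = a₃b², y₄ = b²a₄a₁, where b²a₃b = a₄. Then y₁y₂y₃y₄ = 1, each yᵢ has order 3, and ⟨y₁, y₂, y₃, y₄⟩ = G. -/
theorem stmt14 {G : Type*} [Group G] [Finite G] (a₁ a₂ a₃ a₄ b : G)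
    (ha₁ : a₁ ^ 2 = 1) (ha₂ : a₂ ^ 2 = 1) (ha₃ : a₃ ^ 2 = 1) (ha₄ : a₄ ^ 2 = 1)
    (hb3 : b ^ 3 = 1)
    (hc₁₂ : a₁ * a₂ = a₂ * a₁) (hc₁₃ : a₁ * a₃ = a₃ * a₁) (hc₁₄ : a₁ * a₄ = a₄ * a₁)
    (hc₂₃ : a₂ * a₃ = a₃ * a₂) (hc₂₄ : a₂ * a₄ = a₄ * a₂) (hc₃₄ : a₃ * a₄ = a₄ * a₃)
    (hba₁ : b * a₁ * b⁻¹ = a₂) (hba₂ : b * a₂ * b⁻¹ = a₁ * a₂)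
    (hba₄ : b * a₄ * b⁻¹ = a₃) (hba₃ : b * a₃ * b⁻¹ = a₃ * a₄)
    (hkey : b ^ 2 * a₃ * b = a₄)
    (hgen : Subgroup.closure {a₁, a₂, a₃, a₄, b} = ⊤)
    (hcard : Nat.card G = 48) :
    (a₁ * b) * b * (a₃ * b ^ 2) * (b ^ 2 * a₄ * a₁) = 1
    ∧ orderOf (a₁ * b) = 3 ∧ orderOf b = 3 ∧ orderOf (a₃ * b ^ 2) = 3
    ∧ orderOf (b ^ 2 * a₄ * a₁) = 3
    ∧ Subgroup.closure {a₁ * b, b, a₃ * b ^ 2, b ^ 2 * a₄ * a₁} = ⊤ := by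
  -- plain rewrite forms
  have e1 : b * a₁ = a₂ * b := by rw [← hba₁]; simp [pow_succ, mul_assoc]
  have e2 : b * a₂ = a₁ * (a₂ * b) := by rw [← mul_assoc, ← hba₂]; simp [pow_succ, mul_assoc]
  have e3 : b * a₃ = a₃ * (a₄ * b) := by rw [← mul_assoc, ← hba₃]; simp [pow_succ, mul_assoc]
  have e4 : b * a₄ = a₃ * b := by rw [← hba₄]; simp [pow_succ, mul_assoc]
  have E1 : ∀ x : G, b * (a₁ * x) = a₂ * (b * x) := fun x => by
    rw [← mul_assoc, e1, mul_assoc]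
  have E2 : ∀ x : G, b * (a₂ * x) = a₁ * (a₂ * (b * x)) := fun x => by
    rw [← mul_assoc, e2]; simp [mul_assoc]
  have E3 : ∀ x : G, b * (a₃ * x) = a₃ * (a₄ * (b * x)) := fun x => by
    rw [← mul_assoc, e3]; simp [mul_assoc]
  have E4 : ∀ x : G, b * (a₄ * x) = a₃ * (b * x) := fun x => by
    rw [← mul_assoc, e4, mul_assoc]
  have sq : ∀ y : G, y ^ 2 = 1 → y * y = 1 := fun y h => by rwa [pow_two] at h
  have s1 := sq a₁ ha₁; have s2 := sq a₂ ha₂; have s3 := sq a₃ ha₃; have s4 := sq a₄ ha₄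
  have S1 : ∀ x : G, a₁ * (a₁ * x) = x := fun x => by rw [← mul_assoc, s1, one_mul]
  have S2 : ∀ x : G, a₂ * (a₂ * x) = x := fun x => by rw [← mul_assoc, s2, one_mul]
  have S3 : ∀ x : G, a₃ * (a₃ * x) = x := fun x => by rw [← mul_assoc, s3, one_mul]
  have S4 : ∀ x : G, a₄ * (a₄ * x) = x := fun x => by rw [← mul_assoc, s4, one_mul]
  have b3 : b * (b * b) = 1 := by rw [← hb3]; simp [pow_succ, mul_assoc]
  have B3 : ∀ x : G, b * (b * (b * x)) = x := fun x => by
    rw [← mul_assoc, ← mul_assoc, mul_assoc b b b, b3, one_mul]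
  have c21 : a₂ * a₁ = a₁ * a₂ := hc₁₂.symm
  have C21 : ∀ x : G, a₂ * (a₁ * x) = a₁ * (a₂ * x) := fun x => by
    rw [← mul_assoc, c21, mul_assoc]
  have c43 : a₄ * a₃ = a₃ * a₄ := hc₃₄.symm
  have C43 : ∀ x : G, a₄ * (a₃ * x) = a₃ * (a₄ * x) := fun x => by
    rw [← mul_assoc, c43, mul_assoc]
  have c31 : a₃ * a₁ = a₁ * a₃ := hc₁₃.symm
  have C31 : ∀ x : G, a₃ * (a₁ * x) = a₁ * (a₃ * x) := fun x => by
    rw [← mul_assoc, c31, mul_assoc]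
  have c41 : a₄ * a₁ = a₁ * a₄ := hc₁₄.symm
  have C41 : ∀ x : G, a₄ * (a₁ * x) = a₁ * (a₄ * x) := fun x => by
    rw [← mul_assoc, c41, mul_assoc]
  have c32 : a₃ * a₂ = a₂ * a₃ := hc₂₃.symm
  have C32 : ∀ x : G, a₃ * (a₂ * x) = a₂ * (a₃ * x) := fun x => by
    rw [← mul_assoc, c32, mul_assoc]
  have c42 : a₄ * a₂ = a₂ * a₄ := hc₂₄.symm
  have C42 : ∀ x : G, a₄ * (a₂ * x) = a₂ * (a₄ * x) := fun x => by
    rw [← mul_assoc, c42, mul_assoc]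
  -- b ≠ 1
  have hbne : b ≠ 1 := by
    intro h
    have h1 : a₁ = a₂ := by rw [h] at hba₁; simpa using hba₁
    have h1' : a₁ = 1 := by rw [h] at hba₂; simpa using hba₂
    have h2' : a₂ = 1 := h1 ▸ h1'
    have h4 : a₄ = a₃ := by rw [h] at hba₄; simpa using hba₄
    have h3' : a₄ = 1 := by rw [h] at hba₃; simpa using hba₃
    have h4' : a₃ = 1 := h4 ▸ h3'
    have hsub : ({a₁, a₂, a₃, a₄, b} : Set G) ⊆ ↑(⊥ : Subgroup G) := by
      rw [h1', h2', h4', h3', h]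
      intro x hx
      simp at hx
      simpa [Subgroup.mem_bot] using hx
    have : (⊤ : Subgroup G) ≤ ⊥ := by
      rw [← hgen]; exact (Subgroup.closure_le _).2 hsub
    have hss : Subsingleton G := by
      constructor; intro x y
      have hx : x = 1 := by simpa [Subgroup.mem_bot] using this (Subgroup.mem_top x)
      have hy : y = 1 := by simpa [Subgroup.mem_bot] using this (Subgroup.mem_top y)
      rw [hx, hy]
    have : Nat.card G = 1 := Nat.card_eq_one_iff_unique.2 ⟨hss, ⟨1⟩⟩
    rw [hcard] at this; exact absurd this (by norm_num)
  have p3 : Fact (Nat.Prime 3) := ⟨by norm_num⟩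
  -- cube computations
  have cube1 : (a₁ * b) ^ 3 = 1 := by
    have hh : (a₁ * b) ^ 3 = a₁ * (b * (a₁ * (b * (a₁ * b)))) := by simp [pow_succ, mul_assoc]
    rw [hh]
    simp only [mul_one, mul_assoc, E1, E2, E3, E4, S1, S2, S3, S4, B3, C21, C43, C31, C41, C32, C42, b3, s1, s2, s3, s4, e1, e2, e3, e4, c21, c43, c31, c41, c32, c42]
  have cube3 : (a₃ * b ^ 2) ^ 3 = 1 := by
    have hh : (a₃ * b ^ 2) ^ 3 = a₃ * (b * (b * (a₃ * (b * (b * (a₃ * (b * b))))))) := by simp [pow_succ, mul_assoc]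
    rw [hh]
    simp only [mul_one, mul_assoc, E1, E2, E3, E4, S1, S2, S3, S4, B3, C21, C43, C31, C41, C32, C42, b3, s1, s2, s3, s4, e1, e2, e3, e4, c21, c43, c31, c41, c32, c42]
  have cube4 : (b ^ 2 * a₄ * a₁) ^ 3 = 1 := by
    have hh : (b ^ 2 * a₄ * a₁) ^ 3 = b * (b * (a₄ * (a₁ * (b * (b * (a₄ * (a₁ * (b * (b * (a₄ * a₁)))))))))) := by simp [pow_succ, mul_assoc]
    rw [hh]
    simp only [mul_one, mul_assoc, E1, E2, E3, E4, S1, S2, S3, S4, B3, C21, C43, C31, C41, C32, C42, b3, s1, s2, s3, s4, e1, e2, e3, e4, c21, c43, c31, c41, c32, c42]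
  have prod1 : (a₁ * b) * b * (a₃ * b ^ 2) * (b ^ 2 * a₄ * a₁) = 1 := by
    have : (a₁ * b) * b * (a₃ * b ^ 2) * (b ^ 2 * a₄ * a₁)
        = a₁ * (b * (b * (a₃ * (b * (b * (b * (b * (a₄ * a₁)))))))) := by
      simp [pow_two, mul_assoc]
    rw [this]
    simp only [mul_one, mul_assoc, E1, E2, E3, E4, S1, S2, S3, S4, B3, C21, C43, C31, C41, C32, C42, b3, s1, s2, s3, s4, e1, e2, e3, e4, c21, c43, c31, c41, c32, c42]
  -- nontriviality of the y's
  have hy1 : a₁ * b ≠ 1 := by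
    intro h
    have i1 : a₁⁻¹ = a₁ := by rw [inv_eq_iff_mul_eq_one]; exact s1
    have hb1 : b = a₁ := by rw [← i1]; exact eq_inv_of_mul_eq_one_right h
    have : b * b = 1 := by rw [hb1]; exact s1
    exact hbne (by rw [← hb3, pow_succ, pow_two, mul_assoc, this, mul_one])
  have hy3 : a₃ * b ^ 2 ≠ 1 := by
    intro h
    have hb2 : b * b = a₃ := by
      have : a₃ * (b * b) = 1 := by rw [← pow_two]; exact h
      rw [← one_mul (b*b), ← s3, mul_assoc, this, mul_one]
    have hb4 : b * (b * (b * b)) = 1 := by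
      calc b * (b * (b * b)) = (b * b) * (b * b) := by simp [pow_succ, mul_assoc]
        _ = 1 := by rw [hb2]; exact s3
    have : b = 1 := by
      have h3 : b * (b * b) = 1 := b3
      calc b = b * (b * (b * b)) * (b * (b*b))⁻¹ * b⁻¹ * b := by simp [pow_succ, mul_assoc]
        _ = 1 := by rw [hb4, h3]; simp [pow_succ, mul_assoc]
    exact hbne this
  have hy4 : b ^ 2 * a₄ * a₁ ≠ 1 := by
    intro h
    have i1 : a₁⁻¹ = a₁ := by rw [inv_eq_iff_mul_eq_one]; exact s1
    have i4 : a₄⁻¹ = a₄ := by rw [inv_eq_iff_mul_eq_one]; exact s4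
    have hb2 : b * b = a₁ * a₄ := by
      have h' : b * b * (a₄ * a₁) = 1 := by rw [← pow_two, ← mul_assoc]; exact h
      rw [mul_eq_one_iff_eq_inv] at h'
      rw [h', mul_inv_rev, i1, i4]
    have hb4 : b * (b * (b * b)) = 1 := by
      calc b * (b * (b * b)) = (b * b) * (b * b) := by simp [pow_succ, mul_assoc]
        _ = 1 := by rw [hb2]; simp only [mul_assoc, C41, S1, s4]
    have : b = 1 := by
      calc b = b * (b * (b * b)) * (b * (b*b))⁻¹ * b⁻¹ * b := by simp [pow_succ, mul_assoc]
        _ = 1 := by rw [hb4, b3]; simp [pow_succ, mul_assoc]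
    exact hbne this
  refine ⟨prod1, orderOf_eq_prime cube1 hy1, orderOf_eq_prime hb3 hbne,
    orderOf_eq_prime cube3 hy3, orderOf_eq_prime cube4 hy4, ?_⟩
  -- generation
  rw [eq_top_iff, ← hgen]
  apply (Subgroup.closure_le _).2
  intro x hx
  set T := Subgroup.closure ({a₁ * b, b, a₃ * b ^ 2, b ^ 2 * a₄ * a₁} : Set G) with hT
  have mb : b ∈ T := Subgroup.subset_closure (by simp)
  have m1 : a₁ ∈ T := by
    have : a₁ * b ∈ T := Subgroup.subset_closure (by simp)
    have := mul_mem this (inv_mem mb)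
    simpa using this
  have m2 : a₂ ∈ T := by
    rw [← hba₁]
    exact mul_mem (mul_mem mb m1) (inv_mem mb)
  have m3 : a₃ ∈ T := by
    have h : a₃ * b ^ 2 ∈ T := Subgroup.subset_closure (by simp)
    have := mul_mem h (inv_mem (pow_mem mb 2))
    simpa using this
  have m4 : a₄ ∈ T := by
    have h : b ^ 2 * a₄ * a₁ ∈ T := Subgroup.subset_closure (by simp)
    have h2 : a₄ ∈ T := by
      have := mul_mem (mul_mem (inv_mem (pow_mem mb 2)) h) (inv_mem m1)
      simpa [mul_assoc] using this
    exact h2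
  simp only [Set.mem_insert_iff, Set.mem_singleton_iff] at hx
  rcases hx with h|h|h|h|h <;> subst h <;> assumption
end

section
/- Let G = N ⋊ B be the paper's group with B = ⟨σ⟩ of order 3 acting on N ≅ (ℤ/2)^(2n) without nontrivial fixed points, and let L ≤ N be a subgroup of index 2 with σ⁻¹Lσ ≠ L. Let G act on a ℚ-vector space (or abelian group) V, and let z ∈ V satisfy h·z = z for all h ∈ L and n·z = −z for all n ∈ N \ L. Then (∑_{h∈L} h)·z = 2^(2n−1)·z and (∑_{h∈L} h)·(σ^k z) = 0 for k = 1, 2. -/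
theorem stmt16 {G V : Type*} [Group G] [Finite G] [AddCommGroup V] [Module ℚ V]
    (n : ℕ) (hn : 0 < n) (ρ : Representation ℚ G V)
    (N : Subgroup G) (hN : N.Normal)
    (hsq : ∀ x ∈ N, x ^ 2 = 1) (hcardN : Nat.card N = 2 ^ (2 * n))
    (hfpf : ∀ g : G, g ∉ N → ∀ x ∈ N, g * x * g⁻¹ = x → x = 1)
    (σ : G) (hσ : σ ∉ N) (hσ3 : σ ^ 3 = 1)
    (L : Subgroup G) [Fintype ↥L] (hLN : L ≤ N) (hLidx : L.relIndex N = 2)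
    (hLσ : Subgroup.map (MulAut.conj σ).toMonoidHom L ≠ L)
    (z : V) (hz1 : ∀ h ∈ L, ρ h z = z) (hz2 : ∀ x ∈ N, x ∉ L → ρ x z = -z) :
    (∑ h : ↥L, ρ (h : G)) z = (2 ^ (2 * n - 1) : ℚ) • z
    ∧ ∀ k : ℕ, k = 1 ∨ k = 2 → (∑ h : ↥L, ρ (h : G)) (ρ (σ ^ k) z) = 0 := by
  classical
  have hrel : (L.subgroupOf N).index = 2 := hLidx
  -- cardinality of L
  have h3 : Nat.card ↥(L.subgroupOf N) = Nat.card ↥L :=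
    Nat.card_congr (Subgroup.subgroupOfEquivOfLe hLN).toEquiv
  have hcardL2 : Nat.card ↥L * 2 = 2 ^ (2 * n) := by
    have h2 := Subgroup.card_mul_index (L.subgroupOf N)
    rw [hrel, h3] at h2
    omega
  have hpow : 2 ^ (2 * n - 1) * 2 = 2 ^ (2 * n) := by
    rw [← pow_succ]; congr 1; omega
  have hcardL : Nat.card ↥L = 2 ^ (2 * n - 1) := by omega
  -- part 1
  have part1 : (∑ h : ↥L, ρ (h : G)) z = (2 ^ (2 * n - 1) : ℚ) • z := by
    rw [LinearMap.sum_apply]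
    have he : ∀ h : ↥L, ρ (h : G) z = z := fun h => hz1 h h.2
    simp only [he]
    rw [Finset.sum_const, Finset.card_univ, ← Nat.card_eq_fintype_card, hcardL,
      ← Nat.cast_smul_eq_nsmul ℚ]
    push_cast
    ring_nf
  -- index-two multiplication rule
  have hmul : ∀ x ∈ N, ∀ y ∈ N, (x * y ∈ L ↔ (x ∈ L ↔ y ∈ L)) := by
    intro x hx y hy
    have := Subgroup.mul_mem_iff_of_index_two (H := L.subgroupOf N) hrel
      (a := ⟨x, hx⟩) (b := ⟨y, hy⟩)
    simpa [Subgroup.mem_subgroupOf] using this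
  -- conj map composition
  have hconjmul : ∀ a b : G,
      (L.map (MulAut.conj b).toMonoidHom).map (MulAut.conj a).toMonoidHom
        = L.map (MulAut.conj (a * b)).toMonoidHom := by
    intro a b
    rw [Subgroup.map_map]
    congr 1
    ext x
    simp [MulAut.conj_apply, mul_assoc]
  have claimA : ∀ m : ℕ, m = 1 ∨ m = 2 → L.map (MulAut.conj (σ ^ m)).toMonoidHom ≠ L := by
    intro m hm
    rcases hm with rfl | rfl
    · simpa using hLσ
    · intro h
      apply hLσ
      have h31 : σ * σ ^ 2 = σ ^ 3 := by group
      calc L.map (MulAut.conj σ).toMonoidHom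
          = (L.map (MulAut.conj (σ ^ 2)).toMonoidHom).map (MulAut.conj σ).toMonoidHom := by
            rw [h]
        _ = L.map (MulAut.conj (σ * σ ^ 2)).toMonoidHom := hconjmul σ (σ ^ 2)
        _ = L := by rw [h31, hσ3]; ext x; simp
  -- part 2
  have part2 : ∀ k : ℕ, k = 1 ∨ k = 2 → (∑ h : ↥L, ρ (h : G)) (ρ (σ ^ k) z) = 0 := by
    intro k hk
    set τ := σ ^ k with hτdef
    obtain ⟨m', hm', hinv⟩ : ∃ m', (m' = 1 ∨ m' = 2) ∧ τ⁻¹ = σ ^ m' := by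
      rcases hk with rfl | rfl
      · refine ⟨2, Or.inr rfl, ?_⟩
        rw [hτdef, inv_eq_iff_mul_eq_one, pow_one]
        calc σ * σ ^ 2 = σ ^ 3 := by group
          _ = 1 := hσ3
      · refine ⟨1, Or.inl rfl, ?_⟩
        rw [hτdef, inv_eq_iff_mul_eq_one, pow_one]
        calc σ ^ 2 * σ = σ ^ 3 := by group
          _ = 1 := hσ3
    -- find h₀ ∈ L with τ⁻¹ h₀ τ ∉ L
    have hne : L.map (MulAut.conj τ⁻¹).toMonoidHom ≠ L := by
      rw [hinv]; exact claimA m' hm'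
    obtain ⟨h₀, hh₀⟩ : ∃ h₀ : ↥L, τ⁻¹ * (h₀ : G) * τ ∉ L := by
      by_contra hcon
      push_neg at hcon
      apply hne
      apply Subgroup.eq_of_le_of_card_ge
      · rintro x ⟨y, hy, rfl⟩
        simpa [MulAut.conj_apply] using hcon ⟨y, hy⟩
      · exact le_of_eq (Nat.card_congr
          (L.equivMapOfInjective (MulAut.conj τ⁻¹).toMonoidHom
            (MulAut.conj τ⁻¹).injective).toEquiv)
    -- membership of conjugates in N
    have hNm : ∀ h : ↥L, τ⁻¹ * (h : G) * τ ∈ N := by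
      intro h
      have := hN.conj_mem (h : G) (hLN h.2) τ⁻¹
      simpa using this
    set ε : ↥L → ℚ := fun h => if τ⁻¹ * (h : G) * τ ∈ L then 1 else -1 with hεdef
    have hterm : ∀ h : ↥L, ρ (h : G) (ρ τ z) = ρ τ (ε h • z) := by
      intro h
      have h1 : (h : G) * τ = τ * (τ⁻¹ * (h : G) * τ) := by group
      have h2 : ρ ((h : G) * τ) z = ρ (h : G) (ρ τ z) := by
        rw [map_mul]; rfl
      rw [← h2, h1, map_mul]
      simp only [Module.End.mul_apply, map_smul]
      congr 1
      by_cases hc : τ⁻¹ * (h : G) * τ ∈ L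
      · rw [hz1 _ hc, hεdef]; simp [hc]
      · rw [hz2 _ (hNm h) hc, hεdef]; simp [hc]
    have hflip : ∀ h : ↥L, ε (h₀ * h) = -ε h := by
      intro h
      have hx : τ⁻¹ * ((h₀ * h : ↥L) : G) * τ
          = (τ⁻¹ * (h₀ : G) * τ) * (τ⁻¹ * (h : G) * τ) := by
        push_cast; group
      have := hmul _ (hNm h₀) _ (hNm h)
      rw [hεdef]
      simp only [hx, this]
      by_cases hc : τ⁻¹ * (h : G) * τ ∈ L <;> simp [hc, hh₀]
    have hsum0 : ∑ h : ↥L, ε h = 0 := by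
      have heq : ∑ h : ↥L, ε h = ∑ h : ↥L, -ε h := by
        refine Fintype.sum_equiv (Equiv.mulLeft h₀) ε (fun h => -ε h) ?_
        intro h
        simp [hflip]
      rw [Finset.sum_neg_distrib] at heq
      linarith
    rw [LinearMap.sum_apply]
    calc (∑ h : ↥L, ρ (h : G) (ρ τ z)) = ∑ h : ↥L, ρ τ (ε h • z) := by
          exact Finset.sum_congr rfl fun h _ => hterm h
      _ = ρ τ (∑ h : ↥L, ε h • z) := (map_sum (ρ τ) _ _).symm
      _ = ρ τ ((∑ h : ↥L, ε h) • z) := by rw [Finset.sum_smul]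
      _ = 0 := by rw [hsum0, zero_smul, map_zero]
  exact ⟨part1, part2⟩
end

section
/- With notation as in the previous statement, the endomorphism Φ := (∑_{h∈L} h) ∘ (∑_{k=0}^{2} σ^k) of V acts on the subspace A := {z ∈ V : h z = z for all h ∈ L, and n z = −z for all n ∈ N \ L} as multiplication by 2^(2n−1). -/
theorem stmt17 {G V : Type*} [Group G] [Finite G] [AddCommGroup V] [Module ℚ V]
    (n : ℕ) (hn : 0 < n) (ρ : Representation ℚ G V)
    (N : Subgroup G) (hN : N.Normal)
    (hsq : ∀ x ∈ N, x ^ 2 = 1) (hcardN : Nat.card N = 2 ^ (2 * n))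
    (σ : G) (hσ : σ ∉ N) (hσ3 : σ ^ 3 = 1)
    (L : Subgroup G) [Fintype ↥L] (hLN : L ≤ N) (hLidx : L.relIndex N = 2)
    (hLσ1 : Subgroup.map (MulAut.conj σ).toMonoidHom L ≠ L)
    (hLσ2 : Subgroup.map (MulAut.conj (σ ^ 2)).toMonoidHom L ≠ L) :
    ∀ z : V, (∀ h ∈ L, ρ h z = z) → (∀ x ∈ N, x ∉ L → ρ x z = -z) →
      (∑ h : ↥L, ρ (h : G)) ((∑ k ∈ Finset.range 3, ρ (σ ^ k)) z)
        = (2 ^ (2 * n - 1) : ℚ) • z := by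
  intro z hz1 hz2
  -- index-two multiplication lemma inside N
  have hmul : ∀ a b : G, a ∈ N → b ∈ N → a ∉ L → b ∉ L → a * b ∈ L := by
    intro a b ha hb ha' hb'
    have h2 : (L.subgroupOf N).index = 2 := hLidx
    have := (Subgroup.mul_mem_iff_of_index_two h2 (a := ⟨a, ha⟩) (b := ⟨b, hb⟩)).mpr
    simp only [Subgroup.mem_subgroupOf] at this
    exact this (iff_of_false ha' hb')
  -- key vanishing lemma
  have key : ∀ t : G, Subgroup.map (MulAut.conj t).toMonoidHom L ≠ L →
      ∑ h : ↥L, ρ (t * (h : G) * t⁻¹) z = 0 := by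
    intro t hne
    obtain ⟨h₀, hh₀L, hh₀⟩ : ∃ h₀ ∈ L, t * h₀ * t⁻¹ ∉ L := by
      by_contra hc
      push_neg at hc
      apply hne
      have hle : Subgroup.map (MulAut.conj t).toMonoidHom L ≤ L := by
        rintro x ⟨h, hh, rfl⟩
        simpa using hc h hh
      refine Subgroup.eq_of_le_of_card_ge hle ?_
      have : Nat.card ↥(Subgroup.map (MulAut.conj t).toMonoidHom L) = Nat.card ↥L :=
        (Nat.card_congr (L.equivMapOfInjective _ (MulAut.conj t).injective).toEquiv).symm
      omega
    have hconjN : ∀ h : G, h ∈ L → t * h * t⁻¹ ∈ N := fun h hh => hN.conj_mem h (hLN hh) t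
    refine Finset.sum_ninvolution (fun h => (⟨h₀, hh₀L⟩ : ↥L) * h) ?_ ?_
      (fun _ => Finset.mem_univ _) ?_
    · intro h
      have hmem := h.2
      have e : t * (((⟨h₀, hh₀L⟩ : ↥L) * h : ↥L) : G) * t⁻¹
          = (t * h₀ * t⁻¹) * (t * (h : G) * t⁻¹) := by
        push_cast; group
      rw [e]
      have v2 : ρ ((t * h₀ * t⁻¹) * (t * (h : G) * t⁻¹)) z = -(ρ (t * (h : G) * t⁻¹) z) := by
        by_cases hc : t * (h : G) * t⁻¹ ∈ L
        · rw [map_mul, Module.End.mul_apply, hz1 _ hc, hz2 _ (hconjN h₀ hh₀L) hh₀]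
        · have hin : (t * h₀ * t⁻¹) * (t * (h : G) * t⁻¹) ∈ L :=
            hmul _ _ (hconjN h₀ hh₀L) (hconjN h hmem) hh₀ hc
          rw [hz1 _ hin, hz2 _ (hconjN h hmem) hc, neg_neg]
      rw [v2]; abel
    · intro h hne'
      have hne1 : h₀ ≠ 1 := by rintro rfl; exact hh₀ (by simpa using one_mem L)
      intro hcontra
      apply hne1
      have : (⟨h₀, hh₀L⟩ : ↥L) = 1 := mul_right_cancel (b := h) (by simpa using hcontra)
      simpa using congrArg Subtype.val this
    · intro h
      have hsq₀ : h₀ * h₀ = 1 := by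
        have := hsq h₀ (hLN hh₀L); rwa [pow_two] at this
      ext
      push_cast
      rw [← mul_assoc, hsq₀, one_mul]
  -- group identities from σ³ = 1
  have hσinv : σ⁻¹ = σ ^ 2 :=
    inv_eq_of_mul_eq_one_right (by rw [← pow_succ']; exact hσ3)
  have hσ2inv : (σ ^ 2)⁻¹ = σ :=
    inv_eq_of_mul_eq_one_right (by rw [← pow_succ]; exact hσ3)
  -- per-term rewrites
  have t2 : ∀ h : ↥L, ρ (h : G) (ρ σ z) = ρ σ (ρ (σ ^ 2 * (h : G) * (σ ^ 2)⁻¹) z) := by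
    intro h
    rw [← Module.End.mul_apply, ← map_mul, ← Module.End.mul_apply, ← map_mul]
    congr 2
    rw [hσ2inv, show σ * (σ ^ 2 * (h : G) * σ) = σ ^ 3 * ((h : G) * σ) by group, hσ3,
      one_mul]
  have t3 : ∀ h : ↥L, ρ (h : G) (ρ (σ ^ 2) z) = ρ (σ ^ 2) (ρ (σ * (h : G) * σ⁻¹) z) := by
    intro h
    rw [← Module.End.mul_apply, ← map_mul, ← Module.End.mul_apply, ← map_mul]
    congr 2
    rw [hσinv, show σ ^ 2 * (σ * (h : G) * σ ^ 2) = σ ^ 3 * ((h : G) * σ ^ 2) by group, hσ3,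
      one_mul]
  -- cardinality of L
  have hcardL : Fintype.card ↥L = 2 ^ (2 * n - 1) := by
    have h1 : Nat.card ↥L * 2 = 2 ^ (2 * n) := by
      have e1 : Nat.card ↥(L.subgroupOf N) = Nat.card ↥L :=
        Nat.card_congr (Subgroup.subgroupOfEquivOfLe hLN).toEquiv
      have h := Subgroup.card_mul_index (L.subgroupOf N)
      rw [e1, show (L.subgroupOf N).index = 2 from hLidx, hcardN] at h
      exact h
    have h2 : 2 ^ (2 * n) = 2 ^ (2 * n - 1) * 2 := by
      rw [← pow_succ]; congr 1; omega
    have h3 : Nat.card ↥L = Fintype.card ↥L := Nat.card_eq_fintype_card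
    omega
  -- expand the sums
  have hw : (∑ k ∈ Finset.range 3, ρ (σ ^ k)) z = z + ρ σ z + ρ (σ ^ 2) z := by
    rw [show (3 : ℕ) = 2 + 1 from rfl, Finset.sum_range_succ, Finset.sum_range_succ,
      Finset.sum_range_one]
    simp [LinearMap.add_apply]
  rw [LinearMap.sum_apply, hw]
  have expand : ∑ h : ↥L, ρ (h : G) (z + ρ σ z + ρ (σ ^ 2) z)
      = (∑ h : ↥L, ρ (h : G) z) + (∑ h : ↥L, ρ (h : G) (ρ σ z))
        + (∑ h : ↥L, ρ (h : G) (ρ (σ ^ 2) z)) := by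
    simp [map_add, Finset.sum_add_distrib]
  rw [expand]
  have S1 : ∑ h : ↥L, ρ (h : G) z = (Fintype.card ↥L) • z := by
    rw [Finset.sum_congr rfl (fun h _ => hz1 _ h.2)]
    simp [Finset.card_univ]
  have S2 : ∑ h : ↥L, ρ (h : G) (ρ σ z) = 0 := by
    rw [Finset.sum_congr rfl (fun h _ => t2 h), ← map_sum, key (σ ^ 2) hLσ2, map_zero]
  have S3 : ∑ h : ↥L, ρ (h : G) (ρ (σ ^ 2) z) = 0 := by
    rw [Finset.sum_congr rfl (fun h _ => t3 h), ← map_sum, key σ hLσ1, map_zero]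
  rw [S1, S2, S3, add_zero, add_zero, hcardL]
  rw [show ((2 : ℚ) ^ (2 * n - 1)) = ((2 ^ (2 * n - 1) : ℕ) : ℚ) by push_cast; ring,
    Nat.cast_smul_eq_nsmul]
end

section
/- Let G = N ⋊ B be the paper's group and let G = H₀ ∪ H₁ ∪ ⋯ ∪ H_s be the decomposition into double cosets of B in G, with H₀ = B. Then s = m = (2^(2n)−1)/3 and |H_i| = 9 for every i = 1, …, m; moreover each H_i contains exactly 3 involutions (forming one conjugacy class of involutions of G) and 6 elements of order 3. -/
/-- The double coset `B g B` as a subset of `G`. -/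
def doubleCoset {G : Type*} [Group G] (B : Subgroup G) (g : G) : Set G :=
  {x : G | ∃ b₁ ∈ B, ∃ b₂ ∈ B, x = b₁ * g * b₂}

lemma zcard3 : ({p : ZMod 3 × ZMod 3 | p.1 + p.2 = 0}).ncard = 3 := by
  rw [Set.ncard_eq_toFinset_card']
  decide

lemma zcard6 : ({p : ZMod 3 × ZMod 3 | p.1 + p.2 ≠ 0}).ncard = 6 := by
  rw [Set.ncard_eq_toFinset_card']
  decide

theorem stmt18 {G : Type*} [Group G] [Finite G] (n : ℕ) (hn : 0 < n)
    (N B : Subgroup G) (hN : N.Normal)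
    (hsq : ∀ x ∈ N, x ^ 2 = 1) (hcardN : Nat.card N = 2 ^ (2 * n))
    (hidxN : N.index = 3) (hcardB : Nat.card B = 3) (hBN : B ⊓ N = ⊥)
    (hfpf : ∀ g : G, g ∉ N → ∀ x ∈ N, g * x * g⁻¹ = x → x = 1) :
    Nat.card {S : Set G // ∃ g : G, S = doubleCoset B g} = (2 ^ (2 * n) - 1) / 3 + 1
    ∧ ∀ g : G, g ∉ B →
        (doubleCoset B g).ncard = 9
        ∧ {x ∈ doubleCoset B g | orderOf x = 2}.ncard = 3
        ∧ {x ∈ doubleCoset B g | orderOf x = 3}.ncard = 6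
        ∧ ∀ x ∈ doubleCoset B g, orderOf x = 2 →
            ∀ y : G, (y ∈ doubleCoset B g ∧ orderOf y = 2) ↔ IsConj x y := by
  classical
  haveI : Fact (Nat.Prime 3) := ⟨by norm_num⟩
  haveI : Fact (Nat.Prime 2) := ⟨by norm_num⟩
  -- generator of B
  obtain ⟨b', hb'⟩ := exists_prime_orderOf_dvd_card' (G := B) 3 (by rw [hcardB])
  have hbB : (b' : G) ∈ B := b'.2
  set b : G := (b' : G) with hbdef
  have hb3 : orderOf b = 3 := by rw [Subgroup.orderOf_coe]; exact hb'
  have hb1 : b ≠ 1 := by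
    intro h
    rw [h, orderOf_one] at hb3
    norm_num at hb3
  have hbcube : b ^ 3 = 1 := by rw [← hb3]; exact pow_orderOf_eq_one b
  have hbNotN : b ∉ N := by
    intro h
    have : b ∈ B ⊓ N := ⟨hbB, h⟩
    rw [hBN, Subgroup.mem_bot] at this
    exact hb1 this
  -- B = ⟨b⟩ and membership characterization
  have hBz : Subgroup.zpowers b = B := by
    apply Subgroup.eq_of_le_of_card_ge (Subgroup.zpowers_le.mpr hbB)
    rw [Nat.card_zpowers, hb3, hcardB]
  have hBmem : ∀ y : G, y ∈ B ↔ ∃ k : ℕ, y = b ^ k := by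
    intro y
    constructor
    · intro hy
      rw [← hBz] at hy
      obtain ⟨k, hk⟩ := mem_powers_iff_mem_zpowers.mpr hy
      exact ⟨k, hk.symm⟩
    · rintro ⟨k, rfl⟩
      exact pow_mem hbB k
  -- cube of every element lies in N, hence elements outside N have order 3
  have horder3 : ∀ g : G, g ∉ N → orderOf g = 3 := by
    intro g hg
    have h3N : g ^ 3 ∈ N := by rw [← hidxN]; exact N.pow_index_mem g
    have h3 : g ^ 3 = 1 := hfpf g hg (g ^ 3) h3N (by group)
    exact orderOf_eq_prime h3 (fun h => hg (h ▸ one_mem N))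
  have horder2 : ∀ x ∈ N, x ≠ 1 → orderOf x = 2 := by
    intro x hx hx1
    exact orderOf_eq_prime (hsq x hx) hx1
  have hNinv : ∀ x ∈ N, x⁻¹ = x := by
    intro x hx
    have := hsq x hx
    rw [pow_two] at this
    exact (inv_eq_of_mul_eq_one_right this).symm ▸ (inv_eq_of_mul_eq_one_right this)
  have hNcomm : ∀ x ∈ N, ∀ y ∈ N, x * y = y * x := by
    intro x hx y hy
    have hxy := hsq (x * y) (mul_mem hx hy)
    rw [pow_two] at hxy
    have h1 : x * y = (x * y)⁻¹ := (inv_eq_of_mul_eq_one_right hxy).symm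
    rw [h1, mul_inv_rev, hNinv x hx, hNinv y hy]
  -- decomposition g = x * b ^ k
  have hdecomp : ∀ g : G, ∃ x ∈ N, ∃ k : ℕ, g = x * b ^ k := by
    intro g
    have hbQ : ((b : G) : G ⧸ N) ≠ 1 := by
      rw [Ne, QuotientGroup.eq_one_iff]
      exact hbNotN
    have hQcard : Nat.card (G ⧸ N) = 3 := by rw [← Subgroup.index_eq_card, hidxN]
    have hordQ : orderOf ((b : G) : G ⧸ N) = 3 := by
      have hdvd : orderOf ((b : G) : G ⧸ N) ∣ 3 := by
        rw [← hQcard]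
        exact orderOf_dvd_natCard _
      rcases (Nat.prime_three).eq_one_or_self_of_dvd _ hdvd with h | h
      · exact absurd (orderOf_eq_one_iff.mp h) hbQ
      · exact h
    have htop : Subgroup.zpowers ((b : G) : G ⧸ N) = ⊤ := by
      apply Subgroup.eq_top_of_card_eq
      rw [Nat.card_zpowers, hordQ, hQcard]
    have hgmem : (g : G ⧸ N) ∈ Subgroup.zpowers ((b : G) : G ⧸ N) := by
      rw [htop]; trivial
    obtain ⟨k, hk⟩ := mem_powers_iff_mem_zpowers.mpr hgmem
    refine ⟨g * (b ^ k)⁻¹, ?_, k, by group⟩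
    rw [← QuotientGroup.eq_one_iff]
    have hk' : ((b ^ k : G) : G ⧸ N) = (g : G ⧸ N) := by
      rw [← hk]; push_cast; rfl
    rw [QuotientGroup.mk_mul, QuotientGroup.mk_inv, hk', mul_inv_cancel]
  -- cast helpers
  have hcast : ∀ a : ZMod 3, ((a.val : ℕ) : ZMod 3) = a := ZMod.natCast_zmod_val
  have hdvd3 : ∀ i j : ZMod 3, i + j = 0 ↔ 3 ∣ (i.val + j.val) := by
    intro i j
    rw [← ZMod.natCast_eq_zero_iff, Nat.cast_add, hcast, hcast]
  have hsum : ∀ i j : ZMod 3, i + j = 0 → b ^ j.val = (b ^ i.val)⁻¹ := by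
    intro i j h
    have h1 : b ^ (i.val + j.val) = 1 := by
      apply orderOf_dvd_iff_pow_eq_one.mp
      rw [hb3]
      exact (hdvd3 i j).mp h
    rw [pow_add] at h1
    exact eq_inv_of_mul_eq_one_right h1
  have hpowval : ∀ (k : ℕ), b ^ ((k : ZMod 3)).val = b ^ k := by
    intro k
    rw [ZMod.val_natCast, ← hb3]
    exact pow_mod_orderOf b k
  -- the key parametrization for x ∈ N, x ≠ 1
  have hkey : ∀ x : G, x ∈ N → x ≠ 1 →
      doubleCoset B x = Set.range (fun p : ZMod 3 × ZMod 3 => b ^ p.1.val * x * b ^ p.2.val)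
      ∧ Function.Injective (fun p : ZMod 3 × ZMod 3 => b ^ p.1.val * x * b ^ p.2.val)
      ∧ (∀ p : ZMod 3 × ZMod 3, (b ^ p.1.val * x * b ^ p.2.val ∈ N ↔ p.1 + p.2 = 0))
      ∧ (∀ p : ZMod 3 × ZMod 3, b ^ p.1.val * x * b ^ p.2.val ≠ 1) := by
    intro x hxN hx1
    refine ⟨?_, ?_, ?_, ?_⟩
    · ext y
      constructor
      · rintro ⟨b₁, h₁, b₂, h₂, rfl⟩
        obtain ⟨k₁, rfl⟩ := (hBmem b₁).mp h₁
        obtain ⟨k₂, rfl⟩ := (hBmem b₂).mp h₂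
        exact ⟨((k₁ : ZMod 3), (k₂ : ZMod 3)), by simp only [hpowval]⟩
      · rintro ⟨p, rfl⟩
        exact ⟨b ^ p.1.val, pow_mem hbB _, b ^ p.2.val, pow_mem hbB _, rfl⟩
    · rintro ⟨i, j⟩ ⟨i', j'⟩ h
      simp only [Prod.mk.injEq] at h ⊢
      set c : G := (b ^ i'.val)⁻¹ * b ^ i.val with hc
      set d : G := b ^ j'.val * (b ^ j.val)⁻¹ with hd
      have hcB : c ∈ B := mul_mem (inv_mem (pow_mem hbB _)) (pow_mem hbB _)
      have hdB : d ∈ B := mul_mem (pow_mem hbB _) (inv_mem (pow_mem hbB _))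
      have hcd : x⁻¹ * c * x = d := by
        rw [hc, hd]
        rw [show x⁻¹ * ((b ^ i'.val)⁻¹ * b ^ i.val) * x
            = x⁻¹ * (b ^ i'.val)⁻¹ * (b ^ i.val * x * b ^ j.val) * (b ^ j.val)⁻¹ by group, h]
        group
      have hn1 : c⁻¹ * x⁻¹ * c * x = 1 := by
        have hnN : c⁻¹ * x⁻¹ * c * x ∈ N := by
          have h1 : c⁻¹ * x⁻¹ * c ∈ N := by
            have := hN.conj_mem x⁻¹ (inv_mem hxN) c⁻¹
            simpa using this
          exact mul_mem h1 hxN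
        have hnB : c⁻¹ * x⁻¹ * c * x ∈ B := by
          have : c⁻¹ * x⁻¹ * c * x = c⁻¹ * (x⁻¹ * c * x) := by group
          rw [this, hcd]
          exact mul_mem (inv_mem hcB) hdB
        have : c⁻¹ * x⁻¹ * c * x ∈ B ⊓ N := ⟨hnB, hnN⟩
        rw [hBN, Subgroup.mem_bot] at this
        exact this
      have hcomm : c * x = x * c := by
        have h2 : x⁻¹ * c * x = c := by
          calc x⁻¹ * c * x = c * (c⁻¹ * x⁻¹ * c * x) := by group
          _ = c := by rw [hn1]; group
        calc c * x = x * (x⁻¹ * c * x) := by group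
        _ = x * c := by rw [h2]
      have hcN : c ∈ N := by
        by_contra hcN
        exact hx1 (hfpf c hcN x hxN (by rw [hcomm, mul_inv_cancel_right]))
      have hc1 : c = 1 := by
        have : c ∈ B ⊓ N := ⟨hcB, hcN⟩
        rw [hBN, Subgroup.mem_bot] at this
        exact this
      have heqi : b ^ i.val = b ^ i'.val := by
        have := hc1
        rw [hc, inv_mul_eq_one] at this
        exact this.symm
      have hvi : i.val = i'.val := by
        apply pow_injOn_Iio_orderOf ?_ ?_ heqi
        · rw [Set.mem_Iio, hb3]; exact i.val_lt
        · rw [Set.mem_Iio, hb3]; exact i'.val_lt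
      have hd1 : d = 1 := by
        rw [← hcd, hc1]
        group
      have heqj : b ^ j'.val = b ^ j.val := by
        rw [hd, mul_inv_eq_one] at hd1
        exact hd1
      have hvj : j'.val = j.val := by
        apply pow_injOn_Iio_orderOf ?_ ?_ heqj
        · rw [Set.mem_Iio, hb3]; exact j'.val_lt
        · rw [Set.mem_Iio, hb3]; exact j.val_lt
      constructor
      · rw [← hcast i, hvi, hcast i']
      · rw [← hcast j, ← hvj, hcast j']
    · intro p
      have hsplit : b ^ p.1.val * x * b ^ p.2.val
          = (b ^ p.1.val * x * (b ^ p.1.val)⁻¹) * b ^ (p.1.val + p.2.val) := by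
        rw [pow_add]; group
      have hconjN : b ^ p.1.val * x * (b ^ p.1.val)⁻¹ ∈ N := hN.conj_mem x hxN _
      rw [hsplit]
      rw [N.mul_mem_cancel_left hconjN]
      constructor
      · intro hmem
        have h1 : b ^ (p.1.val + p.2.val) ∈ B ⊓ N := ⟨pow_mem hbB _, hmem⟩
        rw [hBN, Subgroup.mem_bot] at h1
        have hdvd : 3 ∣ p.1.val + p.2.val := by
          have h2 := orderOf_dvd_of_pow_eq_one h1
          rwa [hb3] at h2
        exact (hdvd3 _ _).mpr hdvd
      · intro h0
        have h1 : b ^ (p.1.val + p.2.val) = 1 := by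
          apply orderOf_dvd_iff_pow_eq_one.mp
          rw [hb3]
          exact (hdvd3 _ _).mp h0
        rw [h1]; exact one_mem N
    · intro p h1
      have hx : x = (b ^ p.1.val)⁻¹ * (b ^ p.2.val)⁻¹ := by
        calc x = (b ^ p.1.val)⁻¹ * (b ^ p.1.val * x * b ^ p.2.val) * (b ^ p.2.val)⁻¹ := by group
        _ = (b ^ p.1.val)⁻¹ * (b ^ p.2.val)⁻¹ := by rw [h1]; group
      have hxB : x ∈ B := hx ▸ mul_mem (inv_mem (pow_mem hbB _)) (inv_mem (pow_mem hbB _))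
      have h2 : x ∈ B ⊓ N := ⟨hxB, hxN⟩
      rw [hBN, Subgroup.mem_bot] at h2
      exact hx1 h2
  -- generic double coset lemmas
  have dc_self : ∀ g : G, g ∈ doubleCoset B g := fun g => ⟨1, one_mem B, 1, one_mem B, by group⟩
  have dc_mul_right : ∀ (g : G) (c : G), c ∈ B → doubleCoset B (g * c) = doubleCoset B g := by
    intro g c hc
    ext y
    constructor
    · rintro ⟨b₁, h₁, b₂, h₂, rfl⟩
      exact ⟨b₁, h₁, c * b₂, mul_mem hc h₂, by group⟩
    · rintro ⟨b₁, h₁, b₂, h₂, rfl⟩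
      exact ⟨b₁, h₁, c⁻¹ * b₂, mul_mem (inv_mem hc) h₂, by group⟩
  have hmain : ∀ g : G, g ∉ B →
      (doubleCoset B g).ncard = 9
      ∧ {x ∈ doubleCoset B g | orderOf x = 2}.ncard = 3
      ∧ {x ∈ doubleCoset B g | orderOf x = 3}.ncard = 6
      ∧ ∀ x ∈ doubleCoset B g, orderOf x = 2 →
          ∀ y : G, (y ∈ doubleCoset B g ∧ orderOf y = 2) ↔ IsConj x y := by
    intro g hgB
    obtain ⟨x, hxN, k, rfl⟩ := hdecomp g
    have hx1 : x ≠ 1 := by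
      rintro rfl
      exact hgB (by simpa using pow_mem hbB k)
    obtain ⟨hrange, hinj, hmemN, hne1⟩ := hkey x hxN hx1
    set f : ZMod 3 × ZMod 3 → G := fun p => b ^ p.1.val * x * b ^ p.2.val with hf
    have hDC : doubleCoset B (x * b ^ k) = Set.range f := by
      rw [dc_mul_right x (b ^ k) (pow_mem hbB k), hrange]
    have horder_f2 : ∀ p : ZMod 3 × ZMod 3, p.1 + p.2 = 0 → orderOf (f p) = 2 :=
      fun p hp => horder2 _ ((hmemN p).mpr hp) (hne1 p)
    have horder_f3 : ∀ p : ZMod 3 × ZMod 3, p.1 + p.2 ≠ 0 → orderOf (f p) = 3 :=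
      fun p hp => horder3 _ (fun h => hp ((hmemN p).mp h))
    have h9 : (doubleCoset B (x * b ^ k)).ncard = 9 := by
      rw [hDC, ← Set.image_univ, Set.ncard_image_of_injective _ hinj, Set.ncard_univ]
      simp [Nat.card_eq_fintype_card]
    have hset2 : {y ∈ doubleCoset B (x * b ^ k) | orderOf y = 2}
        = f '' {p : ZMod 3 × ZMod 3 | p.1 + p.2 = 0} := by
      ext y
      simp only [Set.mem_setOf_eq, Set.mem_image, hDC, Set.mem_range]
      constructor
      · rintro ⟨⟨p, rfl⟩, h2⟩
        refine ⟨p, ?_, rfl⟩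
        by_contra hne
        rw [horder_f3 p hne] at h2
        norm_num at h2
      · rintro ⟨p, hp, rfl⟩
        exact ⟨⟨p, rfl⟩, horder_f2 p hp⟩
    have hset3 : {y ∈ doubleCoset B (x * b ^ k) | orderOf y = 3}
        = f '' {p : ZMod 3 × ZMod 3 | p.1 + p.2 ≠ 0} := by
      ext y
      simp only [Set.mem_setOf_eq, Set.mem_image, hDC, Set.mem_range]
      constructor
      · rintro ⟨⟨p, rfl⟩, h2⟩
        refine ⟨p, ?_, rfl⟩
        intro hp
        rw [horder_f2 p hp] at h2
        norm_num at h2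
      · rintro ⟨p, hp, rfl⟩
        exact ⟨⟨p, rfl⟩, horder_f3 p hp⟩
    have hz2 := zcard3
    have hz3 := zcard6
    refine ⟨h9, by rw [hset2, Set.ncard_image_of_injective _ hinj, hz2],
      by rw [hset3, Set.ncard_image_of_injective _ hinj, hz3], ?_⟩
    intro z hz hz2 y
    rw [hDC] at hz
    obtain ⟨p, rfl⟩ := hz
    have hp0 : p.1 + p.2 = 0 := by
      by_contra hne
      rw [horder_f3 p hne] at hz2
      norm_num at hz2
    have hform : ∀ q : ZMod 3 × ZMod 3, q.1 + q.2 = 0 →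
        f q = b ^ q.1.val * x * (b ^ q.1.val)⁻¹ := by
      intro q hq
      show b ^ q.1.val * x * b ^ q.2.val = _
      rw [hsum q.1 q.2 hq]
    constructor
    · rintro ⟨hy, hy2⟩
      rw [hDC] at hy
      obtain ⟨q, rfl⟩ := hy
      have hq0 : q.1 + q.2 = 0 := by
        by_contra hne
        rw [horder_f3 q hne] at hy2
        norm_num at hy2
      have h1 : IsConj x (f p) := isConj_iff.mpr ⟨b ^ p.1.val, (hform p hp0).symm⟩
      have h2 : IsConj x (f q) := isConj_iff.mpr ⟨b ^ q.1.val, (hform q hq0).symm⟩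
      exact h1.symm.trans h2
    · intro hconj
      obtain ⟨c, hc⟩ := isConj_iff.mp hconj
      obtain ⟨w, hwN, k', hc'⟩ := hdecomp c
      have hfpN : f p ∈ N := (hmemN p).mpr hp0
      have huN : b ^ k' * f p * (b ^ k')⁻¹ ∈ N := hN.conj_mem _ hfpN _
      have hy : y = b ^ k' * f p * (b ^ k')⁻¹ := by
        rw [← hc, hc']
        have hcm := hNcomm w hwN _ huN
        calc w * b ^ k' * f p * (w * b ^ k')⁻¹
            = w * (b ^ k' * f p * (b ^ k')⁻¹) * w⁻¹ := by group
        _ = b ^ k' * f p * (b ^ k')⁻¹ := by rw [hcm]; group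
      have hsc : SemiconjBy c (f p) y := by
        show c * f p = y * c
        rw [← hc]
        group
      have hy2 : orderOf y = 2 := (SemiconjBy.orderOf_eq c hsc).symm.trans hz2
      set q1 : ZMod 3 := ((k' + p.1.val : ℕ) : ZMod 3) with hq1
      have hq : f (q1, -q1) = y := by
        rw [hform (q1, -q1) (by simp), hy, hform p hp0]
        have hb1 : b ^ (q1, -q1).1.val = b ^ k' * b ^ p.1.val := by
          show b ^ q1.val = _
          rw [hq1, hpowval (k' + p.1.val), pow_add]
        rw [hb1]
        group
      exact ⟨by rw [hDC]; exact ⟨(q1, -q1), hq⟩, hy2⟩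
  have dc_of_mem : ∀ (g y : G), y ∈ doubleCoset B g → doubleCoset B y = doubleCoset B g := by
    intro g y hy
    obtain ⟨b₁, h₁, b₂, h₂, rfl⟩ := hy
    ext z
    constructor
    · rintro ⟨c₁, hc₁, c₂, hc₂, rfl⟩
      exact ⟨c₁ * b₁, mul_mem hc₁ h₁, b₂ * c₂, mul_mem h₂ hc₂, by group⟩
    · rintro ⟨c₁, hc₁, c₂, hc₂, rfl⟩
      exact ⟨c₁ * b₁⁻¹, mul_mem hc₁ (inv_mem h₁), b₂⁻¹ * c₂, mul_mem (inv_mem h₂) hc₂, by group⟩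
  have dc_of_B : ∀ (g : G), g ∈ B → doubleCoset B g = (B : Set G) := by
    intro g hg
    ext y
    constructor
    · rintro ⟨b₁, h₁, b₂, h₂, rfl⟩
      exact mul_mem (mul_mem h₁ hg) h₂
    · intro hy
      exact ⟨y * g⁻¹, mul_mem hy (inv_mem hg), 1, one_mem B, by group⟩
  refine ⟨?_, fun g hg => hmain g hg⟩
  haveI : Fintype {S : Set G // ∃ g : G, S = doubleCoset B g} := Fintype.ofFinite _
  haveI hFS : ∀ S : {S : Set G // ∃ g : G, S = doubleCoset B g}, Fintype S.1 :=
    fun S => Fintype.ofFinite _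
  let e : (Σ S : {S : Set G // ∃ g : G, S = doubleCoset B g}, S.1) ≃ G :=
    { toFun := fun s => (s.2 : G)
      invFun := fun g => ⟨⟨doubleCoset B g, g, rfl⟩, g, dc_self g⟩
      left_inv := by
        rintro ⟨⟨S, g, rfl⟩, y, hy⟩
        have hSy : doubleCoset B (y : G) = doubleCoset B g := dc_of_mem g y hy
        refine Sigma.ext (Subtype.ext hSy) ?_
        refine (Subtype.heq_iff_coe_eq ?_).mpr rfl
        intro z
        dsimp only
        rw [hSy]
      right_inv := fun g => rfl }
  have hcardsum : Nat.card G
      = ∑ S : {S : Set G // ∃ g : G, S = doubleCoset B g}, Fintype.card S.1 := by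
    rw [← Nat.card_congr e, Nat.card_eq_fintype_card, Fintype.card_sigma]
  let S₀ : {S : Set G // ∃ g : G, S = doubleCoset B g} := ⟨(B : Set G), 1, (dc_of_B 1 (one_mem B)).symm⟩
  have hcS₀ : Fintype.card S₀.1 = 3 := by
    rw [← Nat.card_eq_fintype_card]
    exact hcardB
  have hc9 : ∀ S : {S : Set G // ∃ g : G, S = doubleCoset B g}, S ≠ S₀ → Fintype.card S.1 = 9 := by
    rintro ⟨S, g, rfl⟩ hS
    have hgB : g ∉ B := by
      intro hgmem
      exact hS (Subtype.ext (dc_of_B g hgmem))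
    have h9 := (hmain g hgB).1
    rw [← Nat.card_eq_fintype_card, Nat.card_coe_set_eq]
    exact h9
  have hsum : ∑ S : {S : Set G // ∃ g : G, S = doubleCoset B g}, Fintype.card S.1
      = 3 + 9 * (Fintype.card {S : Set G // ∃ g : G, S = doubleCoset B g} - 1) := by
    rw [← Finset.add_sum_erase Finset.univ _ (Finset.mem_univ S₀), hcS₀]
    congr 1
    rw [Finset.sum_congr rfl (fun S hS => hc9 S (Finset.ne_of_mem_erase hS)), Finset.sum_const,
      Finset.card_erase_of_mem (Finset.mem_univ S₀), smul_eq_mul, Finset.card_univ, mul_comm]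
  have hG : Nat.card G = 2 ^ (2 * n) * 3 := by
    have h := N.card_mul_index
    rw [hcardN, hidxN] at h
    exact h.symm
  have hM : 4 ≤ 2 ^ (2 * n) := by
    calc (4 : ℕ) = 2 ^ 2 := rfl
    _ ≤ 2 ^ (2 * n) := Nat.pow_le_pow_right (by norm_num) (by omega)
  have hkpos : 1 ≤ Fintype.card {S : Set G // ∃ g : G, S = doubleCoset B g} :=
    Fintype.card_pos_iff.mpr ⟨S₀⟩
  rw [Nat.card_eq_fintype_card]
  have hEq : 2 ^ (2 * n) * 3
      = 3 + 9 * (Fintype.card {S : Set G // ∃ g : G, S = doubleCoset B g} - 1) := by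
    rw [← hG, hcardsum, hsum]
  generalize hMdef : 2 ^ (2 * n) = M at hEq hM ⊢
  omega
end
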